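/- Let X be a locally compact Hausdorff space and X̄ a compactification of X. Let B be the collection of subsets of X with compact closure in X, and define A b B iff cl_{X̄}(A) ∩ cl_{X̄}(B) ∩ (X̄ \ X) ≠ ∅. Then (X,B,b) is a coarse proximity space. -/
import Mathlib


open Set

universe u
variable {X : Type u}

/-- The axioms of a coarse proximity structure: a bornology `B` (contains singletons,
closed under subsets and finite unions) and a relation `b` satisfying symmetry,
unboundedness of related sets, relatedness of sets with unbounded intersection,
the union axiom, and the strong axiom. -/
structure IsCoarseProximity (B : Set (Set X)) (b : Set X → Set X → Prop) : Prop where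
  singleton_mem : ∀ x : X, {x} ∈ B
  subset_mem : ∀ A C : Set X, A ∈ B → C ⊆ A → C ∈ B
  union_mem : ∀ A C : Set X, A ∈ B → C ∈ B → A ∪ C ∈ B
  symm : ∀ A C : Set X, b A C → b C A
  unbounded_of_rel : ∀ A C : Set X, b A C → A ∉ B ∧ C ∉ B
  rel_of_inter : ∀ A C : Set X, A ∩ C ∉ B → b A C
  union_iff : ∀ A C D : Set X, b (A ∪ C) D ↔ b A D ∨ b C D
  strong : ∀ A C : Set X, ¬ b A C → ∃ E : Set X, ¬ b A E ∧ ¬ b (univ \ E) C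

/-- A coarse proximity space structure on `X`. -/
structure CoarseProximity (X : Type u) where
  B : Set (Set X)
  b : Set X → Set X → Prop
  isCP : IsCoarseProximity B b

/-- The weak asymptotic resemblance induced by a coarse proximity. -/
def phi (cp : CoarseProximity X) (A C : Set X) : Prop :=
  (∀ C' ⊆ C, C' ∉ cp.B → cp.b A C') ∧ (∀ A' ⊆ A, A' ∉ cp.B → cp.b A' C)

lemma mem_B_iff {Xbar : Type u} [TopologicalSpace Xbar] [CompactSpace Xbar] [T2Space Xbar]
    (X : Set Xbar) (S : Set ↥X) :
    IsCompact (closure (Subtype.val '' S : Set Xbar) ∩ X) ↔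
      closure (Subtype.val '' S : Set Xbar) ⊆ X := by
  constructor
  · intro h
    have hcl : IsClosed (closure (Subtype.val '' S : Set Xbar) ∩ X) := h.isClosed
    have hsub : (Subtype.val '' S : Set Xbar) ⊆ closure (Subtype.val '' S) ∩ X := by
      intro x hx
      exact ⟨subset_closure hx, by rcases hx with ⟨y, _, rfl⟩; exact y.2⟩
    exact fun z hz => (closure_minimal hsub hcl hz).2
  · intro h
    rw [inter_eq_left.mpr h]
    exact isClosed_closure.isCompact

lemma notmem_iff {Xbar : Type u} [TopologicalSpace Xbar] [CompactSpace Xbar] [T2Space Xbar]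
    (X : Set Xbar) (S : Set ↥X) :
    ¬ IsCompact (closure (Subtype.val '' S : Set Xbar) ∩ X) ↔
      (closure (Subtype.val '' S : Set Xbar) ∩ Xᶜ).Nonempty := by
  rw [mem_B_iff, ← not_disjoint_iff_nonempty_inter, Set.disjoint_compl_right_iff_subset]

/-- for a dense open subset `X` of a compact Hausdorff space `X̄`
(so `X` is locally compact Hausdorff and `X̄` is a compactification of `X`),
the sets with compact closure in `X` together with
`A b C ↔ cl_X̄(A) ∩ cl_X̄(C) ∩ (X̄ \ X) ≠ ∅` form a coarse proximity space. -/
theorem compactification_isCoarseProximity {Xbar : Type u} [TopologicalSpace Xbar]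
    [CompactSpace Xbar] [T2Space Xbar] (X : Set Xbar) (hX : IsOpen X) (hd : Dense X) :
    IsCoarseProximity (X := ↥X)
      {S : Set ↥X | IsCompact (closure (Subtype.val '' S : Set Xbar) ∩ X)}
      (fun A C => (closure (Subtype.val '' A : Set Xbar) ∩
        closure (Subtype.val '' C : Set Xbar) ∩ Xᶜ).Nonempty) := by
  constructor
  · -- singleton
    intro x
    rw [mem_setOf_eq, mem_B_iff]
    simp only [image_singleton, closure_singleton]
    exact singleton_subset_iff.mpr x.2
  · -- subset
    intro A C hA hCA
    rw [mem_setOf_eq, mem_B_iff] at hA ⊢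
    exact (closure_mono (image_mono hCA)).trans hA
  · -- union
    intro A C hA hC
    rw [mem_setOf_eq, mem_B_iff] at hA hC ⊢
    rw [image_union, closure_union]
    exact union_subset hA hC
  · -- symm
    intro A C ⟨z, hz⟩
    exact ⟨z, ⟨hz.1.2, hz.1.1⟩, hz.2⟩
  · -- unbounded
    intro A C ⟨z, hz⟩
    constructor <;> rw [mem_setOf_eq, notmem_iff]
    · exact ⟨z, hz.1.1, hz.2⟩
    · exact ⟨z, hz.1.2, hz.2⟩
  · -- rel_of_inter
    intro A C h
    rw [mem_setOf_eq, notmem_iff] at h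
    obtain ⟨z, hz1, hz2⟩ := h
    have : (Subtype.val '' (A ∩ C) : Set Xbar) ⊆ Subtype.val '' A ∩ Subtype.val '' C := by
      rintro x ⟨y, ⟨hyA, hyC⟩, rfl⟩
      exact ⟨⟨y, hyA, rfl⟩, ⟨y, hyC, rfl⟩⟩
    have hz1' := closure_inter_subset_inter_closure _ _ (closure_mono this hz1)
    exact ⟨z, ⟨hz1'.1, hz1'.2⟩, hz2⟩
  · -- union_iff
    intro A C D
    rw [image_union, closure_union, union_inter_distrib_right, union_inter_distrib_right,
      union_nonempty]
  · -- strong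
    intro A C hAC
    set K := closure (Subtype.val '' A : Set Xbar) ∩ Xᶜ with hKdef
    set L := closure (Subtype.val '' C : Set Xbar) ∩ Xᶜ with hLdef
    have hK : IsCompact K := (isClosed_closure.inter hX.isClosed_compl).isCompact
    have hL : IsCompact L := (isClosed_closure.inter hX.isClosed_compl).isCompact
    have hdisj : Disjoint K L := by
      rw [disjoint_iff_inter_eq_empty]
      by_contra h
      obtain ⟨z, hz⟩ := nonempty_iff_ne_empty.mpr h
      exact hAC ⟨z, ⟨hz.1.1, hz.2.1⟩, hz.1.2⟩
    obtain ⟨U, V, hU, hV, hKU, hLV, hUV⟩ := SeparatedNhds.of_isCompact_isCompact hK hL hdisj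
    refine ⟨Subtype.val ⁻¹' V, ?_, ?_⟩
    · rintro ⟨z, hz⟩
      have hVc : closure (Subtype.val '' (Subtype.val ⁻¹' V : Set ↥X) : Set Xbar) ⊆ Uᶜ := by
        apply closure_minimal _ (hU.isClosed_compl)
        rintro x ⟨y, hy, rfl⟩
        exact fun hxU => hUV.ne_of_mem hxU hy rfl
      exact hVc hz.1.2 (hKU ⟨hz.1.1, hz.2⟩)
    · rintro ⟨z, hz⟩
      have hVc : closure (Subtype.val '' (univ \ Subtype.val ⁻¹' V : Set ↥X) : Set Xbar) ⊆ Vᶜ := by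
        apply closure_minimal _ (hV.isClosed_compl)
        rintro x ⟨y, hy, rfl⟩
        exact hy.2
      exact hVc hz.1.1 (hLV ⟨hz.1.2, hz.2⟩)
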